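/- arXiv:1701.04660 — 3 statements merged into one kernel-verified Lean document; each statement's English description precedes it below -/
import Mathlib

section
/- There is a constant C such that for all x, x' ∈ [0,1], ∫₀^∞ ∫₀¹ (G_t(x,y) − G_t(x',y))² dy dt ≤ C·|x − x'|, where G is the Dirichlet heat kernel on [0,1]. -/
open Real MeasureTheory intervalIntegral

/-- The Dirichlet heat kernel for `∂ₜu = (1/2)u''` on `[0,1]`. -/
noncomputable def G (t x y : ℝ) : ℝ :=
  2 * ∑' n : ℕ, Real.sin (((n : ℝ) + 1) * Real.pi * x) *
    Real.sin (((n : ℝ) + 1) * Real.pi * y) *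
    Real.exp (-((n : ℝ) + 1) ^ 2 * Real.pi ^ 2 * t / 2)

open Set

lemma summable_aux {c : ℝ} (hc : 0 < c) :
    Summable fun n : ℕ => Real.exp (-(((n:ℝ)+1)^2 * c)) := by
  have hg : Summable fun n : ℕ => Real.exp (-c) ^ (n+1) :=
    (summable_geometric_of_lt_one (Real.exp_pos _).le
      (Real.exp_lt_one_iff.2 (neg_neg_iff_pos.2 hc))).comp_injective (add_left_injective 1)
  refine Summable.of_nonneg_of_le (fun n => (Real.exp_pos _).le) (fun n => ?_) hg
  rw [← Real.exp_nat_mul]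
  apply Real.exp_le_exp.2
  push_cast
  nlinarith [mul_nonneg (mul_nonneg (by positivity : (0:ℝ) ≤ (n:ℝ)+1) (Nat.cast_nonneg (α := ℝ) n)) hc.le]


lemma int_cos_mul {c : ℝ} (hc : c ≠ 0) :
    ∫ y in (0:ℝ)..1, Real.cos (c*y) = Real.sin c / c := by
  rw [intervalIntegral.integral_comp_mul_left Real.cos hc]
  simp [integral_cos, div_eq_inv_mul]

lemma sin_mul_sin_eq (a b y : ℝ) :
    Real.sin (a*y) * Real.sin (b*y)
      = (Real.cos ((a-b)*y) - Real.cos ((a+b)*y))/2 := by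
  have h := Real.cos_sub_cos ((a-b)*y) ((a+b)*y)
  have e1 : ((a-b)*y + (a+b)*y)/2 = a*y := by ring
  have e2 : ((a-b)*y - (a+b)*y)/2 = -(b*y) := by ring
  rw [e1, e2, Real.sin_neg] at h
  linarith

lemma orth (m n : ℕ) :
    ∫ y in (0:ℝ)..1, Real.sin (((m:ℝ)+1)*π*y) * Real.sin (((n:ℝ)+1)*π*y)
      = if m = n then 1/2 else 0 := by
  have hπ := Real.pi_pos
  set a : ℝ := ((m:ℝ)+1)*π with ha
  set b : ℝ := ((n:ℝ)+1)*π with hb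
  have hab : a + b ≠ 0 := by positivity
  have hsab : Real.sin (a+b) = 0 := by
    have : a + b = ((m+n+2 : ℕ) : ℝ) * π := by push_cast [ha, hb]; ring
    rw [this, Real.sin_nat_mul_pi]
  have hint : ∀ c : ℝ, IntervalIntegrable (fun y => Real.cos (c*y)) volume 0 1 :=
    fun c => (Real.continuous_cos.comp (continuous_const.mul continuous_id)).intervalIntegrable 0 1
  simp_rw [sin_mul_sin_eq a b]
  rw [intervalIntegral.integral_div, intervalIntegral.integral_sub (hint _) (hint _),
    int_cos_mul hab, hsab]
  by_cases h : m = n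
  · subst h
    have : a - b = 0 := by rw [ha, hb]; ring
    rw [this]
    norm_num
  · have hd : a - b ≠ 0 := by
      rw [ha, hb, sub_ne_zero]
      intro hcon
      have h2 : ((m:ℝ)+1) = ((n:ℝ)+1) := mul_right_cancel₀ (ne_of_gt hπ) hcon
      exact h (by exact_mod_cast add_right_cancel h2)
    have hsd : Real.sin (a-b) = 0 := by
      have : a - b = (((m:ℤ) - n : ℤ) : ℝ) * π := by push_cast [ha, hb]; ring
      rw [this, Real.sin_int_mul_pi]
    rw [int_cos_mul hd, hsd, if_neg h]
    norm_num


noncomputable def sinK (n : ℕ) (y : ℝ) : ℝ := Real.sin (((n:ℝ)+1)*Real.pi*y)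
noncomputable def expK (t : ℝ) (n : ℕ) : ℝ := Real.exp (-((n:ℝ)+1)^2*Real.pi^2*t/2)
noncomputable def coefK (x x' t : ℝ) (n : ℕ) : ℝ := (sinK n x - sinK n x') * expK t n

lemma abs_sinK_le (n : ℕ) (y : ℝ) : |sinK n y| ≤ 1 := Real.abs_sin_le_one _

lemma expK_pos (t : ℝ) (n : ℕ) : 0 < expK t n := Real.exp_pos _

lemma expK_eq (t : ℝ) : expK t = fun n : ℕ => Real.exp (-(((n:ℝ)+1)^2 * (Real.pi^2*t/2))) := by
  funext n; unfold expK; ring_nf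

lemma summable_expK {t : ℝ} (ht : 0 < t) : Summable (expK t) := by
  rw [expK_eq]
  exact summable_aux (by positivity)

lemma abs_coefK_le (x x' t : ℝ) (n : ℕ) : |coefK x x' t n| ≤ 2 * expK t n := by
  unfold coefK
  rw [abs_mul, abs_of_pos (expK_pos t n)]
  have : |sinK n x - sinK n x'| ≤ 2 := by
    calc |sinK n x - sinK n x'| ≤ |sinK n x| + |sinK n x'| := abs_sub _ _
    _ ≤ 1 + 1 := add_le_add (abs_sinK_le _ _) (abs_sinK_le _ _)
    _ = 2 := by norm_num
  nlinarith [expK_pos t n, abs_nonneg (sinK n x - sinK n x')]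

lemma G_eq (t x y : ℝ) : G t x y = 2 * ∑' n : ℕ, sinK n x * sinK n y * expK t n := rfl

lemma summable_G {t : ℝ} (ht : 0 < t) (x y : ℝ) :
    Summable fun n : ℕ => sinK n x * sinK n y * expK t n := by
  refine (summable_expK ht).of_norm_bounded (fun n => ?_)
  rw [Real.norm_eq_abs, abs_mul, abs_mul, abs_of_pos (expK_pos t n)]
  have h1 : |sinK n x| * |sinK n y| ≤ 1 :=
    mul_le_one₀ (abs_sinK_le n x) (abs_nonneg _) (abs_sinK_le n y)
  nlinarith [expK_pos t n]

lemma summable_coefK {t : ℝ} (ht : 0 < t) (x x' : ℝ) :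
    Summable fun n : ℕ => |coefK x x' t n| :=
  ((summable_expK ht).mul_left 2).of_nonneg_of_le (fun _ => abs_nonneg _)
    (fun n => abs_coefK_le x x' t n)

lemma G_diff {t : ℝ} (ht : 0 < t) (x x' y : ℝ) :
    G t x y - G t x' y = 2 * ∑' n : ℕ, coefK x x' t n * sinK n y := by
  rw [G_eq, G_eq, ← mul_sub]
  congr 1
  rw [← Summable.tsum_sub (summable_G ht x y) (summable_G ht x' y)]
  exact tsum_congr fun n => by unfold coefK; ring

lemma continuous_sinK (n : ℕ) : Continuous (sinK n) := by
  unfold sinK; fun_prop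

lemma abs_cs_le (x x' t : ℝ) (n : ℕ) (y : ℝ) :
    |coefK x x' t n * sinK n y| ≤ 2 * expK t n := by
  rw [abs_mul]
  calc |coefK x x' t n| * |sinK n y| ≤ (2 * expK t n) * 1 :=
        mul_le_mul (abs_coefK_le x x' t n) (abs_sinK_le n y) (abs_nonneg _)
          (by linarith [expK_pos t n])
  _ = 2 * expK t n := mul_one _

lemma summable_prod_bound {t : ℝ} (ht : 0 < t) :
    Summable fun p : ℕ × ℕ => (2 * expK t p.1) * (2 * expK t p.2) := by
  refine Summable.mul_of_nonneg (f := fun n : ℕ => 2 * expK t n) (g := fun n : ℕ => 2 * expK t n)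
    ((summable_expK ht).mul_left 2) ((summable_expK ht).mul_left 2)
    (fun n => (mul_pos two_pos (expK_pos t n)).le) (fun n => (mul_pos two_pos (expK_pos t n)).le)

lemma summable_F {t : ℝ} (ht : 0 < t) (x x' y : ℝ) :
    Summable fun p : ℕ × ℕ =>
      (coefK x x' t p.1 * sinK p.1 y) * (coefK x x' t p.2 * sinK p.2 y) := by
  refine (summable_prod_bound ht).of_norm_bounded (fun p => ?_)
  rw [Real.norm_eq_abs, abs_mul]
  exact mul_le_mul (abs_cs_le x x' t p.1 y) (abs_cs_le x x' t p.2 y) (abs_nonneg _)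
    (by linarith [expK_pos t p.1])

lemma sq_tsum {t : ℝ} (ht : 0 < t) (x x' y : ℝ) :
    (∑' n : ℕ, coefK x x' t n * sinK n y)^2
      = ∑' p : ℕ × ℕ, (coefK x x' t p.1 * sinK p.1 y) * (coefK x x' t p.2 * sinK p.2 y) := by
  rw [sq, Summable.tsum_prod (summable_F ht x x' y)]
  rw [← tsum_mul_right]
  exact tsum_congr fun m => (tsum_mul_left).symm

lemma expK_sq (t : ℝ) (n : ℕ) :
    expK t n * expK t n = Real.exp (-((n:ℝ)+1)^2*Real.pi^2*t) := by
  unfold expK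
  rw [← Real.exp_add]
  ring_nf

lemma orthK (m n : ℕ) :
    ∫ y in (0:ℝ)..1, sinK m y * sinK n y = if m = n then (1:ℝ)/2 else 0 := by
  unfold sinK; exact orth m n

lemma inner_integral {t : ℝ} (ht : 0 < t) (x x' : ℝ) :
    ∫ y in (0:ℝ)..1, (G t x y - G t x' y)^2
      = 2 * ∑' n : ℕ, (sinK n x - sinK n x')^2 * Real.exp (-((n:ℝ)+1)^2*Real.pi^2*t) := by
  set c : ℕ → ℝ := coefK x x' t with hc
  set F : ℕ × ℕ → ℝ → ℝ := fun p y => (c p.1 * sinK p.1 y) * (c p.2 * sinK p.2 y) with hF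
  have h1 : ∀ y : ℝ, (G t x y - G t x' y)^2 = 4 * ∑' p : ℕ × ℕ, F p y := by
    intro y
    rw [G_diff ht, mul_pow, sq_tsum ht]
    norm_num
    rfl
  have hmeas : ∀ p : ℕ × ℕ, AEStronglyMeasurable (F p) (volume.restrict (Ioc (0:ℝ) 1)) :=
    fun p => (((continuous_const.mul (continuous_sinK p.1)).mul
      (continuous_const.mul (continuous_sinK p.2)))).aestronglyMeasurable
  have hvol : (volume.restrict (Ioc (0:ℝ) 1)) Set.univ = 1 := by
    rw [Measure.restrict_apply_univ, Real.volume_Ioc]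
    norm_num
  have hfin : ∑' p : ℕ × ℕ, ∫⁻ y, ‖F p y‖₊ ∂(volume.restrict (Ioc (0:ℝ) 1)) ≠ ⊤ := by
    have hb : ∀ p : ℕ × ℕ, ∫⁻ y, ‖F p y‖₊ ∂(volume.restrict (Ioc (0:ℝ) 1))
        ≤ ENNReal.ofReal ((2 * expK t p.1) * (2 * expK t p.2)) := by
      intro p
      calc ∫⁻ y, ‖F p y‖₊ ∂(volume.restrict (Ioc (0:ℝ) 1))
          ≤ ∫⁻ _, ENNReal.ofReal ((2 * expK t p.1) * (2 * expK t p.2))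
              ∂(volume.restrict (Ioc (0:ℝ) 1)) := by
            refine lintegral_mono fun y => ?_
            rw [← enorm_eq_nnnorm, ← ofReal_norm]
            refine ENNReal.ofReal_le_ofReal ?_
            rw [Real.norm_eq_abs, hF, abs_mul]
            exact mul_le_mul (abs_cs_le x x' t p.1 y) (abs_cs_le x x' t p.2 y)
              (abs_nonneg _) (by linarith [expK_pos t p.1])
        _ = ENNReal.ofReal ((2 * expK t p.1) * (2 * expK t p.2)) := by
            rw [lintegral_const, hvol, mul_one]
    refine ne_top_of_le_ne_top ?_ (ENNReal.tsum_le_tsum hb)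
    rw [← ENNReal.ofReal_tsum_of_nonneg
      (fun p : ℕ × ℕ => by nlinarith [expK_pos t p.1, expK_pos t p.2] : ∀ p : ℕ × ℕ, 0 ≤ (2 * expK t p.1) * (2 * expK t p.2))
      (summable_prod_bound ht)]
    exact ENNReal.ofReal_ne_top
  have horth : ∀ p : ℕ × ℕ, ∫ y in Ioc (0:ℝ) 1, F p y
      = c p.1 * c p.2 * (if p.1 = p.2 then (1:ℝ)/2 else 0) := by
    intro p
    have : F p = fun y => (c p.1 * c p.2) * (sinK p.1 y * sinK p.2 y) := by
      funext y; rw [hF]; ring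
    rw [this, MeasureTheory.integral_const_mul,
      ← intervalIntegral.integral_of_le (zero_le_one) (μ := volume), orthK p.1 p.2]
  have hsum2 : Summable fun p : ℕ × ℕ =>
      c p.1 * c p.2 * (if p.1 = p.2 then (1:ℝ)/2 else 0) := by
    refine (summable_prod_bound ht).of_norm_bounded (fun p => ?_)
    rw [Real.norm_eq_abs, abs_mul, abs_mul]
    have h1' : |c p.1| * |c p.2| ≤ (2 * expK t p.1) * (2 * expK t p.2) :=
      mul_le_mul (abs_coefK_le x x' t p.1) (abs_coefK_le x x' t p.2) (abs_nonneg _)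
        (by linarith [expK_pos t p.1])
    have h2 : |if p.1 = p.2 then (1:ℝ)/2 else 0| ≤ 1 := by
      split <;> rw [abs_of_nonneg (by norm_num)] <;> norm_num
    nlinarith [abs_nonneg (c p.1), abs_nonneg (c p.2), mul_nonneg (abs_nonneg (c p.1)) (abs_nonneg (c p.2)), expK_pos t p.1, expK_pos t p.2]
  simp only [h1]
  rw [intervalIntegral.integral_const_mul, intervalIntegral.integral_of_le (zero_le_one),
    MeasureTheory.integral_tsum hmeas hfin]
  have : ∑' p : ℕ × ℕ, ∫ y in Ioc (0:ℝ) 1, F p y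
      = ∑' n : ℕ, c n * c n * ((1:ℝ)/2) := by
    rw [tsum_congr horth, Summable.tsum_prod hsum2]
    refine tsum_congr fun m => ?_
    rw [tsum_eq_single m (fun n hn => by simp [Ne.symm hn])]
    simp
  rw [this]
  have : ∀ n : ℕ, c n * c n * ((1:ℝ)/2)
      = (1/2) * ((sinK n x - sinK n x')^2 * Real.exp (-((n:ℝ)+1)^2*Real.pi^2*t)) := by
    intro n
    rw [hc]
    unfold coefK
    rw [show ∀ a b : ℝ, a * b * (a * b) * (1/2) = (1/2) * ((a*a) * (b*b)) from fun a b => by ring,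
      expK_sq]
    ring
  rw [tsum_congr this, tsum_mul_left]
  ring

lemma summable_inv_sq : Summable fun n : ℕ => 1 / ((n:ℝ)+1)^2 := by
  have h : Summable fun n : ℕ => 1 / (n:ℝ)^2 := by
    simpa using Real.summable_one_div_nat_pow.mpr one_lt_two
  refine ((summable_nat_add_iff 1).2 h).congr fun n => ?_
  push_cast
  ring

lemma int_exp {a : ℝ} (ha : 0 < a) :
    ∫ t in Ioi (0:ℝ), Real.exp (-(a*t)) = 1/a := by
  have := integral_comp_mul_left_Ioi (fun u => Real.exp (-u)) 0 ha
  simp only [mul_zero] at this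
  rw [show (fun t => Real.exp (-(a*t))) = fun t => (fun u => Real.exp (-u)) (a*t) from rfl,
    this, integral_exp_neg_Ioi_zero, smul_eq_mul, mul_one, one_div]

lemma integrable_exp_decay {a : ℝ} (ha : 0 < a) :
    IntegrableOn (fun t => Real.exp (-(a*t))) (Ioi (0:ℝ)) := by
  have := exp_neg_integrableOn_Ioi 0 ha
  simpa [neg_mul] using this

lemma outer_integral {x x' : ℝ} :
    ∫ t in Ioi (0:ℝ), (∫ y in (0:ℝ)..1, (G t x y - G t x' y)^2)
      = 2 * ∑' n : ℕ, (sinK n x - sinK n x')^2 * (1 / (((n:ℝ)+1)^2 * Real.pi^2)) := by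
  have hπ := Real.pi_pos
  set Δ : ℕ → ℝ := fun n => (sinK n x - sinK n x') with hΔ
  set a : ℕ → ℝ := fun n => ((n:ℝ)+1)^2 * Real.pi^2 with haa
  have ha : ∀ n, 0 < a n := fun n => by
    rw [haa]; positivity
  have hg : ∀ n t, Δ n ^ 2 * Real.exp (-((n:ℝ)+1)^2*Real.pi^2*t)
      = Δ n ^ 2 * Real.exp (-(a n * t)) := by
    intro n t
    congr 2
    rw [haa]; ring
  have hΔsq : ∀ n, Δ n ^2 ≤ 4 := by
    intro n
    have h1 : |Δ n| ≤ 2 := by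
      rw [hΔ]
      calc |sinK n x - sinK n x'| ≤ |sinK n x| + |sinK n x'| := abs_sub _ _
      _ ≤ 1 + 1 := add_le_add (abs_sinK_le _ _) (abs_sinK_le _ _)
      _ = 2 := by norm_num
    calc Δ n ^ 2 = |Δ n|^2 := (sq_abs _).symm
    _ ≤ 2^2 := by nlinarith [abs_nonneg (Δ n)]
    _ = 4 := by norm_num
  have hcong : ∀ t ∈ Ioi (0:ℝ), (∫ y in (0:ℝ)..1, (G t x y - G t x' y)^2)
      = 2 * ∑' n : ℕ, Δ n ^ 2 * Real.exp (-(a n * t)) := by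
    intro t ht
    rw [inner_integral ht x x']
    congr 1
    exact tsum_congr fun n => hg n t
  rw [MeasureTheory.setIntegral_congr_fun measurableSet_Ioi hcong,
    MeasureTheory.integral_const_mul]
  congr 1
  have hmeas : ∀ n : ℕ, AEStronglyMeasurable (fun t => Δ n ^ 2 * Real.exp (-(a n * t)))
      (volume.restrict (Ioi (0:ℝ))) := fun n => (by fun_prop : Continuous fun t : ℝ => Δ n ^ 2 * Real.exp (-(a n * t))).aestronglyMeasurable
  have hint : ∀ n : ℕ, ∫ t in Ioi (0:ℝ), Δ n ^ 2 * Real.exp (-(a n * t))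
      = Δ n ^ 2 * (1 / a n) := fun n => by
    rw [MeasureTheory.integral_const_mul, int_exp (ha n)]
  have hsummand : Summable fun n : ℕ => Δ n ^ 2 * (1 / a n) := by
    have hb : Summable fun n : ℕ => 4 * (1 / a n) := by
      refine (summable_inv_sq.mul_left (4 / Real.pi^2)).congr fun n => ?_
      rw [haa]
      field_simp
    refine hb.of_nonneg_of_le (fun n => mul_nonneg (sq_nonneg _) (one_div_pos.2 (ha n)).le)
      (fun n => mul_le_mul_of_nonneg_right (hΔsq n) (one_div_pos.2 (ha n)).le)
  have hfin : ∑' n : ℕ, ∫⁻ t, ‖Δ n ^ 2 * Real.exp (-(a n * t))‖₊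
      ∂(volume.restrict (Ioi (0:ℝ))) ≠ ⊤ := by
    have heq : ∀ n : ℕ, ∫⁻ t, ‖Δ n ^ 2 * Real.exp (-(a n * t))‖₊
        ∂(volume.restrict (Ioi (0:ℝ))) = ENNReal.ofReal (Δ n ^ 2 * (1 / a n)) := by
      intro n
      calc ∫⁻ t, ‖Δ n ^ 2 * Real.exp (-(a n * t))‖₊ ∂(volume.restrict (Ioi (0:ℝ)))
          = ∫⁻ t, ENNReal.ofReal (Δ n ^ 2 * Real.exp (-(a n * t)))
            ∂(volume.restrict (Ioi (0:ℝ))) :=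
            lintegral_congr fun t => by
              rw [← enorm_eq_nnnorm, ← ofReal_norm, Real.norm_eq_abs,
                abs_of_nonneg (by positivity)]
        _ = ENNReal.ofReal (∫ t in Ioi (0:ℝ), Δ n ^ 2 * Real.exp (-(a n * t))) :=
            (MeasureTheory.ofReal_integral_eq_lintegral_ofReal
              ((integrable_exp_decay (ha n)).const_mul _)
              (Filter.Eventually.of_forall fun t => by positivity)).symm
        _ = ENNReal.ofReal (Δ n ^ 2 * (1 / a n)) := by rw [hint n]
    rw [tsum_congr heq, ← ENNReal.ofReal_tsum_of_nonneg (fun n => by positivity) hsummand]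
    exact ENNReal.ofReal_ne_top
  rw [MeasureTheory.integral_tsum hmeas hfin, tsum_congr hint]

lemma abs_sin_sub_sin (A B : ℝ) : |Real.sin A - Real.sin B| ≤ |A - B| := by
  rw [Real.sin_sub_sin, abs_mul, abs_mul]
  have h1 : |Real.sin ((A-B)/2)| ≤ |(A-B)/2| := Real.abs_sin_le_abs
  have h2 : |Real.cos ((A+B)/2)| ≤ 1 := Real.abs_cos_le_one _
  have h3 : |(A-B)/2| = |A-B|/2 := by rw [abs_div]; norm_num
  rw [h3] at h1
  rw [abs_two]
  nlinarith [abs_nonneg (Real.sin ((A-B)/2)), abs_nonneg (A-B), abs_nonneg (Real.cos ((A+B)/2))]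

lemma tail_inv_sq {N : ℕ} (hN : 1 ≤ N) : ∑' i : ℕ, 1/((i:ℝ)+N+1)^2 ≤ 1/(N:ℝ) := by
  have hN' : (1:ℝ) ≤ (N:ℝ) := by exact_mod_cast hN
  refine Real.tsum_le_of_sum_range_le (fun i => by positivity) (fun n => ?_)
  have key : ∀ i : ℕ, 1/((i:ℝ)+N+1)^2
      ≤ (fun i : ℕ => 1/((i:ℝ)+N)) i - (fun i : ℕ => 1/((i:ℝ)+N)) (i+1) := by
    intro i
    have ha : (0:ℝ) < (i:ℝ)+N := by positivity
    have ha1 : (0:ℝ) < (i:ℝ)+N+1 := by positivity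
    simp only
    push_cast
    have h2 : (0:ℝ) < (i:ℝ)+1+(N:ℝ) := by linarith
    rw [show 1/((i:ℝ)+N) - 1/((i:ℝ)+1+N) = 1/(((i:ℝ)+N)*((i:ℝ)+N+1)) by
      rw [div_sub_div _ _ ha.ne' h2.ne',
        show ((i:ℝ)+N)*((i:ℝ)+N+1) = ((i:ℝ)+N)*((i:ℝ)+1+N) by ring]
      congr 1
      ring]
    apply one_div_le_one_div_of_le (by positivity)
    nlinarith
  calc ∑ i ∈ Finset.range n, 1/((i:ℝ)+N+1)^2
      ≤ ∑ i ∈ Finset.range n,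
        ((fun i : ℕ => 1/((i:ℝ)+N)) i - (fun i : ℕ => 1/((i:ℝ)+N)) (i+1)) :=
        Finset.sum_le_sum fun i _ => key i
    _ = (fun i : ℕ => 1/((i:ℝ)+N)) 0 - (fun i : ℕ => 1/((i:ℝ)+N)) n :=
        Finset.sum_range_sub' (fun i : ℕ => 1/((i:ℝ)+N)) n
    _ ≤ 1/(N:ℝ) := by
        simp only
        have : (0:ℝ) ≤ 1/((n:ℝ)+N) := by positivity
        norm_num
        linarith

lemma series_bound {x x' : ℝ} (hx : x ∈ Icc (0:ℝ) 1) (hx' : x' ∈ Icc (0:ℝ) 1) :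
    ∑' n : ℕ, (sinK n x - sinK n x')^2 * (1/(((n:ℝ)+1)^2*Real.pi^2))
      ≤ (2 + 4/Real.pi^2) * |x - x'| := by
  have hπ := Real.pi_pos
  set δ : ℝ := |x - x'| with hδdef
  have hδ0 : 0 ≤ δ := abs_nonneg _
  have hδ1 : δ ≤ 1 := by
    rw [hδdef, abs_le]
    obtain ⟨h1, h2⟩ := hx
    obtain ⟨h3, h4⟩ := hx'
    constructor <;> linarith
  set q : ℕ → ℝ := fun n => (sinK n x - sinK n x')^2 * (1/(((n:ℝ)+1)^2*Real.pi^2)) with hqdef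
  have hq0 : ∀ n, 0 ≤ q n := fun n => by rw [hqdef]; positivity
  have hΔle : ∀ n : ℕ, |sinK n x - sinK n x'| ≤ ((n:ℝ)+1)*Real.pi*δ := by
    intro n
    unfold sinK
    refine le_trans (abs_sin_sub_sin _ _) ?_
    rw [show ((n:ℝ)+1)*Real.pi*x - ((n:ℝ)+1)*Real.pi*x' = (((n:ℝ)+1)*Real.pi)*(x-x') by ring,
      abs_mul, abs_of_nonneg (by positivity : (0:ℝ) ≤ ((n:ℝ)+1)*Real.pi), hδdef]
  have hΔ2 : ∀ n : ℕ, |sinK n x - sinK n x'| ≤ 2 := by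
    intro n
    calc |sinK n x - sinK n x'| ≤ |sinK n x| + |sinK n x'| := abs_sub _ _
    _ ≤ 1 + 1 := add_le_add (abs_sinK_le _ _) (abs_sinK_le _ _)
    _ = 2 := by norm_num
  have hqδ : ∀ n, q n ≤ δ^2 := by
    intro n
    rw [hqdef]
    simp only
    have h1 : (sinK n x - sinK n x')^2 ≤ (((n:ℝ)+1)*Real.pi*δ)^2 := by
      rw [← sq_abs (sinK n x - sinK n x')]
      exact pow_le_pow_left₀ (abs_nonneg _) (hΔle n) 2
    calc (sinK n x - sinK n x')^2 * (1/(((n:ℝ)+1)^2*Real.pi^2))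
        ≤ (((n:ℝ)+1)*Real.pi*δ)^2 * (1/(((n:ℝ)+1)^2*Real.pi^2)) := by
          apply mul_le_mul_of_nonneg_right h1 (by positivity)
      _ = δ^2 := by field_simp
  have hq4 : ∀ n, q n ≤ 4/Real.pi^2 * (1/((n:ℝ)+1)^2) := by
    intro n
    rw [hqdef]
    simp only
    have h1 : (sinK n x - sinK n x')^2 ≤ 4 := by
      rw [← sq_abs (sinK n x - sinK n x')]
      nlinarith [abs_nonneg (sinK n x - sinK n x'), hΔ2 n]
    calc (sinK n x - sinK n x')^2 * (1/(((n:ℝ)+1)^2*Real.pi^2))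
        ≤ 4 * (1/(((n:ℝ)+1)^2*Real.pi^2)) := by
          apply mul_le_mul_of_nonneg_right h1 (by positivity)
      _ = 4/Real.pi^2 * (1/((n:ℝ)+1)^2) := by field_simp
  have hq : Summable q :=
    Summable.of_nonneg_of_le hq0 hq4 (summable_inv_sq.mul_left _)
  by_cases hzero : δ = 0
  · have hxx : x = x' := by
      rw [hδdef] at hzero
      exact sub_eq_zero.1 (abs_eq_zero.1 hzero)
    have hqz : ∀ n, q n = 0 := by
      intro n
      rw [hqdef]
      simp [hxx]
    rw [tsum_congr hqz, tsum_zero, hzero, mul_zero]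
  · have hδpos : 0 < δ := lt_of_le_of_ne hδ0 (Ne.symm hzero)
    set N : ℕ := ⌈1/δ⌉₊ with hNdef
    have hN1 : 1 ≤ N := Nat.one_le_ceil_iff.2 (by positivity)
    have hNpos : (0:ℝ) < (N:ℝ) := by exact_mod_cast hN1
    have hNle : (N:ℝ) ≤ 1/δ + 1 := (Nat.ceil_lt_add_one (by positivity)).le
    have hNge : 1/δ ≤ (N:ℝ) := Nat.le_ceil _
    have hinvN : 1/(N:ℝ) ≤ δ := by
      rw [div_le_iff₀ hNpos]
      rw [div_le_iff₀ hδpos] at hNge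
      linarith
    rw [← Summable.sum_add_tsum_nat_add N hq]
    have hhead : ∑ i ∈ Finset.range N, q i ≤ 2 * δ := by
      calc ∑ i ∈ Finset.range N, q i ≤ ∑ _i ∈ Finset.range N, δ^2 :=
            Finset.sum_le_sum fun i _ => hqδ i
        _ = (N:ℝ) * δ^2 := by rw [Finset.sum_const, Finset.card_range, nsmul_eq_mul]
        _ ≤ (1/δ + 1) * δ^2 := by nlinarith
        _ = δ + δ^2 := by field_simp
        _ ≤ 2 * δ := by nlinarith
    have hshift : Summable fun i : ℕ => 1/((i:ℝ)+N+1)^2 := by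
      refine ((summable_nat_add_iff N).2 summable_inv_sq).congr fun i => ?_
      push_cast
      ring_nf
    have htail : ∑' i : ℕ, q (i + N) ≤ 4/Real.pi^2 * δ := by
      calc ∑' i : ℕ, q (i + N)
          ≤ ∑' i : ℕ, 4/Real.pi^2 * (1/((i:ℝ)+N+1)^2) := by
            refine Summable.tsum_le_tsum (fun i => ?_) ((summable_nat_add_iff N).2 hq)
              (hshift.mul_left _)
            refine le_trans (hq4 (i + N)) (le_of_eq ?_)
            push_cast
            ring_nf
        _ = 4/Real.pi^2 * ∑' i : ℕ, 1/((i:ℝ)+N+1)^2 := tsum_mul_left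
        _ ≤ 4/Real.pi^2 * (1/(N:ℝ)) :=
            mul_le_mul_of_nonneg_left (tail_inv_sq hN1) (by positivity)
        _ ≤ 4/Real.pi^2 * δ := mul_le_mul_of_nonneg_left hinvN (by positivity)
    calc ∑ i ∈ Finset.range N, q i + ∑' i : ℕ, q (i + N)
        ≤ 2 * δ + 4/Real.pi^2 * δ := add_le_add hhead htail
      _ = (2 + 4/Real.pi^2) * δ := by ring

theorem integral_heatKernel_sq_diff_le :
    ∃ C : ℝ, ∀ x ∈ Set.Icc (0 : ℝ) 1, ∀ x' ∈ Set.Icc (0 : ℝ) 1,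
      ∫ t in Set.Ioi (0 : ℝ), (∫ y in (0 : ℝ)..1, (G t x y - G t x' y) ^ 2)
        ≤ C * |x - x'| := by
  refine ⟨2 * (2 + 4/Real.pi^2), fun x hx x' hx' => ?_⟩
  rw [outer_integral, mul_assoc]
  have := series_bound hx hx'
  have hπ := Real.pi_pos
  nlinarith [series_bound hx hx']
end

section
/- There is a constant C such that for all x, x' ∈ [0,1], ∫₀^∞ ∫₀¹ |G_t(x,y) − G_t(x',y)| dy dt ≤ C·|x−x'|·log(max(e, 1/|x−x'|)), where G is the Dirichlet heat kernel on [0,1]. -/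
open Real MeasureTheory intervalIntegral
open Set

namespace HeatAux

/-- rate of decay of the m-th mode -/
noncomputable def rate (m : ℕ) : ℝ := ((m : ℝ) + 1) ^ 2 * π ^ 2 / 2

lemma rate_pos (m : ℕ) : 0 < rate m := by
  have : (0:ℝ) < ((m:ℝ)+1) ^ 2 := by positivity
  have := Real.pi_pos
  unfold rate; positivity

lemma exp_eq (m : ℕ) (t : ℝ) :
    Real.exp (-((m : ℝ) + 1) ^ 2 * Real.pi ^ 2 * t / 2) = Real.exp (-(rate m * t)) := by
  unfold rate; ring_nf

lemma summable_exp {t : ℝ} (ht : 0 < t) :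
    Summable (fun m : ℕ => Real.exp (-(rate m * t))) := by
  have hr : Real.exp (-(π ^ 2 * t / 2)) < 1 := by
    rw [Real.exp_lt_one_iff]
    have h := Real.pi_pos
    have : 0 < π ^ 2 * t / 2 := by positivity
    linarith
  have hr0 : 0 ≤ Real.exp (-(π ^ 2 * t / 2)) := (Real.exp_pos _).le
  refine Summable.of_nonneg_of_le (fun m => (Real.exp_pos _).le)
    (fun m => ?_) (summable_geometric_of_lt_one hr0 hr)
  rw [← Real.exp_nat_mul]
  apply Real.exp_le_exp.2
  have h1 : (m : ℝ) ≤ ((m:ℝ)+1)^2 := by nlinarith [sq_nonneg ((m:ℝ))]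
  have hπ := Real.pi_pos
  have ht2 : 0 < π ^ 2 * t / 2 := by positivity
  unfold rate
  have : (m:ℝ) * (π^2 * t /2) ≤ ((m:ℝ)+1)^2 * (π^2*t/2) :=
    mul_le_mul_of_nonneg_right h1 ht2.le
  nlinarith [this]


lemma abs_sin_sub_sin_le_min (A B : ℝ) : |Real.sin A - Real.sin B| ≤ min 2 |A - B| := by
  refine le_min ?_ ?_
  · calc |Real.sin A - Real.sin B| ≤ |Real.sin A| + |Real.sin B| := abs_sub _ _
      _ ≤ 1 + 1 := add_le_add (Real.abs_sin_le_one A) (Real.abs_sin_le_one B)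
      _ = 2 := by norm_num
  · rw [Real.sin_sub_sin]
    calc |2 * Real.sin ((A - B)/2) * Real.cos ((A+B)/2)|
        = 2 * |Real.sin ((A - B)/2)| * |Real.cos ((A+B)/2)| := by
          rw [abs_mul, abs_mul, abs_two]
      _ ≤ 2 * (|(A - B)/2|) * 1 := by
          apply mul_le_mul (mul_le_mul_of_nonneg_left (Real.abs_sin_le_abs) (by norm_num))
            (Real.abs_cos_le_one _) (abs_nonneg _) (by positivity)
      _ = |A - B| := by rw [abs_div, abs_two]; ring

/-- the m-th term of the dominating series -/
noncomputable def Sterm (h : ℝ) (m : ℕ) (t : ℝ) : ℝ :=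
  2 * min 2 (((m : ℝ) + 1) * π * h) * Real.exp (-(rate m * t))

lemma Sterm_nonneg {h : ℝ} (hh : 0 ≤ h) (m : ℕ) (t : ℝ) : 0 ≤ Sterm h m t := by
  have : (0:ℝ) ≤ min 2 (((m : ℝ) + 1) * π * h) := le_min (by norm_num)
    (by positivity)
  unfold Sterm; positivity

lemma summable_Sterm {h t : ℝ} (hh : 0 ≤ h) (ht : 0 < t) :
    Summable (fun m : ℕ => Sterm h m t) := by
  refine Summable.of_nonneg_of_le (fun m => Sterm_nonneg hh m t) (fun m => ?_)
    ((summable_exp ht).mul_left 4)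
  unfold Sterm
  have h1 : min 2 (((m : ℝ) + 1) * π * h) ≤ 2 := min_le_left _ _
  have h2 := (Real.exp_pos (-(rate m * t))).le
  nlinarith

lemma abs_G_sub_le {t : ℝ} (ht : 0 < t) (x x' y : ℝ) :
    |G t x y - G t x' y| ≤ ∑' m, Sterm |x - x'| m t := by
  have hE : ∀ m : ℕ, Real.exp (-((m : ℝ) + 1) ^ 2 * Real.pi ^ 2 * t / 2)
      = Real.exp (-(rate m * t)) := fun m => exp_eq m t
  set a : ℕ → ℝ := fun m => Real.sin (((m : ℝ) + 1) * Real.pi * x) *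
    Real.sin (((m : ℝ) + 1) * Real.pi * y) *
    Real.exp (-((m : ℝ) + 1) ^ 2 * Real.pi ^ 2 * t / 2) with ha
  set b : ℕ → ℝ := fun m => Real.sin (((m : ℝ) + 1) * Real.pi * x') *
    Real.sin (((m : ℝ) + 1) * Real.pi * y) *
    Real.exp (-((m : ℝ) + 1) ^ 2 * Real.pi ^ 2 * t / 2) with hb
  have habs : ∀ (z : ℝ) (m : ℕ),
      |Real.sin (((m : ℝ) + 1) * Real.pi * z) *
        Real.sin (((m : ℝ) + 1) * Real.pi * y) *
        Real.exp (-((m : ℝ) + 1) ^ 2 * Real.pi ^ 2 * t / 2)|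
        ≤ Real.exp (-(rate m * t)) := by
    intro z m
    rw [abs_mul, abs_mul, hE m, Real.abs_exp]
    have h1 := Real.abs_sin_le_one (((m : ℝ) + 1) * Real.pi * z)
    have h2 := Real.abs_sin_le_one (((m : ℝ) + 1) * Real.pi * y)
    have h3 := (Real.exp_pos (-(rate m * t))).le
    have h0 : |Real.sin (((m : ℝ) + 1) * Real.pi * z)| *
        |Real.sin (((m : ℝ) + 1) * Real.pi * y)| ≤ 1 :=
      mul_le_one₀ h1 (abs_nonneg _) h2
    calc |Real.sin (((m : ℝ) + 1) * Real.pi * z)| *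
          |Real.sin (((m : ℝ) + 1) * Real.pi * y)| * Real.exp (-(rate m * t))
        ≤ 1 * Real.exp (-(rate m * t)) := mul_le_mul_of_nonneg_right h0 h3
      _ = Real.exp (-(rate m * t)) := one_mul _
  have hsa : Summable a := by
    refine Summable.of_norm_bounded (summable_exp ht) (fun m => habs x m)
  have hsb : Summable b := by
    refine Summable.of_norm_bounded (summable_exp ht) (fun m => habs x' m)
  have hdiff : ∀ m : ℕ, |a m - b m| ≤
      min 2 (((m : ℝ) + 1) * π * |x - x'|) * Real.exp (-(rate m * t)) := by
    intro m
    have : a m - b m = (Real.sin (((m : ℝ) + 1) * Real.pi * x)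
        - Real.sin (((m : ℝ) + 1) * Real.pi * x')) *
        Real.sin (((m : ℝ) + 1) * Real.pi * y) *
        Real.exp (-(rate m * t)) := by
      rw [ha, hb]; simp only [hE m]; ring
    rw [this, abs_mul, abs_mul, Real.abs_exp]
    have h1 := abs_sin_sub_sin_le_min (((m : ℝ) + 1) * Real.pi * x)
      (((m : ℝ) + 1) * Real.pi * x')
    have h2 : |((m : ℝ) + 1) * Real.pi * x - ((m : ℝ) + 1) * Real.pi * x'|
        = ((m : ℝ) + 1) * π * |x - x'| := by
      rw [show ((m : ℝ) + 1) * Real.pi * x - ((m : ℝ) + 1) * Real.pi * x'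
        = (((m : ℝ) + 1) * Real.pi) * (x - x') by ring, abs_mul]
      congr 1
      rw [abs_of_nonneg (by positivity)]
    rw [h2] at h1
    have h3 := Real.abs_sin_le_one (((m : ℝ) + 1) * Real.pi * y)
    have h4 := (Real.exp_pos (-(rate m * t))).le
    have h5 : (0:ℝ) ≤ min 2 (((m : ℝ) + 1) * π * |x - x'|) :=
      le_min (by norm_num) (by positivity)
    gcongr
    calc _ ≤ min 2 (((m : ℝ) + 1) * π * |x - x'|) * 1 :=
          mul_le_mul h1 h3 (abs_nonneg _) h5
      _ = _ := mul_one _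
  have hsmin : Summable (fun m : ℕ =>
      min 2 (((m : ℝ) + 1) * π * |x - x'|) * Real.exp (-(rate m * t))) := by
    have := summable_Sterm (abs_nonneg (x - x')) ht
    unfold Sterm at this
    simpa using ((this.mul_left (1/2)).congr (fun m => by ring))
  have hsd : Summable (fun m => |a m - b m|) :=
    Summable.of_nonneg_of_le (fun m => abs_nonneg _) hdiff hsmin
  calc |G t x y - G t x' y| = |2 * (∑' m, a m - ∑' m, b m)| := by
        unfold G; rw [mul_sub]
    _ = 2 * |∑' m, (a m - b m)| := by
        rw [← Summable.tsum_sub hsa hsb, abs_mul, abs_two]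
    _ ≤ 2 * ∑' m, |a m - b m| := by
        have := norm_tsum_le_tsum_norm (f := fun m => a m - b m) (by simpa using hsd)
        simp only [Real.norm_eq_abs] at this
        linarith
    _ ≤ 2 * ∑' m : ℕ, (min 2 (((m : ℝ) + 1) * π * |x - x'|) * Real.exp (-(rate m * t))) := by
        have := Summable.tsum_le_tsum hdiff hsd hsmin
        linarith
    _ = ∑' m, Sterm |x - x'| m t := by
        rw [← tsum_mul_left]
        exact tsum_congr (fun m => by simp only [Sterm]; ring)


lemma inner_le {t : ℝ} (ht : 0 < t) (x x' : ℝ) :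
    (∫ y in (0:ℝ)..1, |G t x y - G t x' y|) ≤ ∑' m, Sterm |x - x'| m t := by
  have hb : ∀ y ∈ Set.uIoc (0:ℝ) 1, ‖|G t x y - G t x' y|‖ ≤ ∑' m, Sterm |x - x'| m t := by
    intro y _
    rw [Real.norm_eq_abs, abs_abs]
    exact abs_G_sub_le ht x x' y
  have h2 := intervalIntegral.norm_integral_le_of_norm_le_const hb
  rw [Real.norm_eq_abs] at h2
  calc (∫ y in (0:ℝ)..1, |G t x y - G t x' y|)
      ≤ abs (∫ y in (0:ℝ)..1, |G t x y - G t x' y|) := le_abs_self _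
    _ ≤ (∑' m, Sterm |x - x'| m t) * |1 - 0| := h2
    _ = _ := by norm_num

lemma integrable_exp_rate (m : ℕ) :
    IntegrableOn (fun t => Real.exp (-(rate m * t))) (Ioi (0:ℝ)) := by
  simpa [neg_mul] using exp_neg_integrableOn_Ioi 0 (rate_pos m)

lemma integral_exp_rate (m : ℕ) :
    ∫ t in Ioi (0:ℝ), Real.exp (-(rate m * t)) = (rate m)⁻¹ := by
  have hb := rate_pos m
  have h := integral_comp_mul_left_Ioi (fun x => Real.exp (-x)) 0 hb
  simp only [mul_zero, integral_exp_neg_Ioi, neg_zero, Real.exp_zero, smul_eq_mul,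
    mul_one] at h
  exact h

lemma integrable_Sterm (h : ℝ) (m : ℕ) :
    IntegrableOn (fun t => Sterm h m t) (Ioi (0:ℝ)) := by
  unfold Sterm
  exact (integrable_exp_rate m).const_mul _

lemma integral_Sterm (h : ℝ) (m : ℕ) :
    ∫ t in Ioi (0:ℝ), Sterm h m t = 2 * min 2 (((m : ℝ) + 1) * π * h) * (rate m)⁻¹ := by
  unfold Sterm
  rw [MeasureTheory.integral_const_mul, integral_exp_rate]

/-- the value of the `t`-integral of the dominating series -/
noncomputable def vsum (h : ℝ) : ℝ :=
  ∑' m : ℕ, 2 * min 2 (((m : ℝ) + 1) * π * h) * (rate m)⁻¹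

lemma rate_inv_eq (m : ℕ) : (rate m)⁻¹ = 2 / (((m : ℝ) + 1) ^ 2 * π ^ 2) := by
  unfold rate
  rw [inv_div]

lemma summable_inv_sq : Summable (fun m : ℕ => (((m : ℝ) + 1) ^ 2)⁻¹) := by
  have h0 : Summable (fun n : ℕ => ((n : ℝ) ^ 2)⁻¹) :=
    Real.summable_nat_pow_inv.2 one_lt_two
  have h : Summable (fun n : ℕ => (((n + 1 : ℕ) : ℝ) ^ 2)⁻¹) :=
    (summable_nat_add_iff 1).2 h0
  refine h.congr (fun m => ?_)
  push_cast
  ring_nf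

lemma v_nonneg (h : ℝ) (hh : 0 ≤ h) (m : ℕ) :
    0 ≤ 2 * min 2 (((m : ℝ) + 1) * π * h) * (rate m)⁻¹ := by
  have h5 : (0:ℝ) ≤ min 2 (((m : ℝ) + 1) * π * h) := le_min (by norm_num) (by positivity)
  have := (rate_pos m).le
  positivity

lemma summable_v {h : ℝ} (hh : 0 ≤ h) :
    Summable (fun m : ℕ => 2 * min 2 (((m : ℝ) + 1) * π * h) * (rate m)⁻¹) := by
  refine Summable.of_nonneg_of_le (v_nonneg h hh) (fun m => ?_)
    (summable_inv_sq.mul_left (8 / π ^ 2))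
  rw [rate_inv_eq]
  have h5 : min 2 (((m : ℝ) + 1) * π * h) ≤ 2 := min_le_left _ _
  have h6 : (0:ℝ) ≤ min 2 (((m : ℝ) + 1) * π * h) := le_min (by norm_num) (by positivity)
  have hπ := Real.pi_pos
  have hm : (0:ℝ) < ((m : ℝ) + 1) ^ 2 := by positivity
  rw [div_eq_mul_inv, mul_inv, show (8 / π ^ 2 * (((m : ℝ) + 1) ^ 2)⁻¹ : ℝ)
    = 2 * 2 * (2 * ((((m : ℝ) + 1) ^ 2)⁻¹ * (π ^ 2)⁻¹)) by ring]
  have : (0:ℝ) < (((m : ℝ) + 1) ^ 2)⁻¹ * (π ^ 2)⁻¹ := by positivity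
  nlinarith


/-- majorant function of `t` -/
noncomputable def gmaj (h t : ℝ) : ℝ := (∑' m : ℕ, ENNReal.ofReal (Sterm h m t)).toReal

lemma continuous_Sterm (h : ℝ) (m : ℕ) : Continuous (fun t => Sterm h m t) := by
  unfold Sterm
  fun_prop

lemma gmaj_meas (h : ℝ) : Measurable (gmaj h) := by
  apply ENNReal.measurable_toReal.comp
  exact Measurable.ennreal_tsum
    (fun m => ENNReal.measurable_ofReal.comp (continuous_Sterm h m).measurable)

lemma gmaj_nonneg (h t : ℝ) : 0 ≤ gmaj h t := ENNReal.toReal_nonneg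

lemma esum_eq {h t : ℝ} (hh : 0 ≤ h) (ht : 0 < t) :
    (∑' m : ℕ, ENNReal.ofReal (Sterm h m t)) = ENNReal.ofReal (∑' m : ℕ, Sterm h m t) :=
  (ENNReal.ofReal_tsum_of_nonneg (fun m => Sterm_nonneg hh m t) (summable_Sterm hh ht)).symm

lemma gmaj_eq {h t : ℝ} (hh : 0 ≤ h) (ht : 0 < t) : gmaj h t = ∑' m : ℕ, Sterm h m t := by
  rw [gmaj, esum_eq hh ht, ENNReal.toReal_ofReal
    (tsum_nonneg (fun m => Sterm_nonneg hh m t))]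

lemma lintegral_Sterm (h : ℝ) (hh : 0 ≤ h) (m : ℕ) :
    ∫⁻ t in Ioi (0:ℝ), ENNReal.ofReal (Sterm h m t)
      = ENNReal.ofReal (2 * min 2 (((m : ℝ) + 1) * π * h) * (rate m)⁻¹) := by
  rw [← ofReal_integral_eq_lintegral_ofReal (integrable_Sterm h m)
    (ae_of_all _ (fun t => Sterm_nonneg hh m t)), integral_Sterm]

lemma lintegral_esum (h : ℝ) (hh : 0 ≤ h) :
    ∫⁻ t in Ioi (0:ℝ), (∑' m : ℕ, ENNReal.ofReal (Sterm h m t))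
      = ENNReal.ofReal (vsum h) := by
  rw [lintegral_tsum (fun m =>
    ((continuous_Sterm h m).measurable.ennreal_ofReal).aemeasurable)]
  simp_rw [lintegral_Sterm h hh]
  rw [vsum, ENNReal.ofReal_tsum_of_nonneg (v_nonneg h hh) (summable_v hh)]

lemma integrable_gmaj {h : ℝ} (hh : 0 ≤ h) : IntegrableOn (gmaj h) (Ioi (0:ℝ)) := by
  refine ⟨(gmaj_meas h).aestronglyMeasurable, ?_⟩
  rw [HasFiniteIntegral]
  calc ∫⁻ t in Ioi (0:ℝ), ‖gmaj h t‖₊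
      = ∫⁻ t in Ioi (0:ℝ), ENNReal.ofReal (gmaj h t) := by
        apply lintegral_congr
        intro t
        exact Real.enorm_eq_ofReal (gmaj_nonneg h t)
    _ ≤ ∫⁻ t in Ioi (0:ℝ), (∑' m : ℕ, ENNReal.ofReal (Sterm h m t)) := by
        apply lintegral_mono
        intro t
        exact ENNReal.ofReal_toReal_le
    _ = ENNReal.ofReal (vsum h) := lintegral_esum h hh
    _ < ⊤ := ENNReal.ofReal_lt_top

lemma integral_gmaj {h : ℝ} (hh : 0 ≤ h) :
    ∫ t in Ioi (0:ℝ), gmaj h t = vsum h := by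
  rw [MeasureTheory.integral_eq_lintegral_of_nonneg_ae
    (ae_of_all _ (fun t => gmaj_nonneg h t)) (gmaj_meas h).aestronglyMeasurable]
  have key : ∫⁻ t in Ioi (0:ℝ), ENNReal.ofReal (gmaj h t)
      = ENNReal.ofReal (vsum h) := by
    rw [← lintegral_esum h hh]
    apply setLIntegral_congr_fun measurableSet_Ioi
    intro t ht
    dsimp only
    rw [gmaj, ENNReal.ofReal_toReal]
    rw [esum_eq hh ht]
    exact ENNReal.ofReal_ne_top
  rw [key, ENNReal.toReal_ofReal]
  exact tsum_nonneg (v_nonneg h hh)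


lemma v_le_one {h : ℝ} (hh : 0 ≤ h) (m : ℕ) :
    2 * min 2 (((m : ℝ) + 1) * π * h) * (rate m)⁻¹ ≤ 2 * h * (((m : ℝ) + 1))⁻¹ := by
  rw [rate_inv_eq]
  have hπ : (2:ℝ) ≤ π := by linarith [Real.pi_gt_three]
  have hM : (0:ℝ) < (m : ℝ) + 1 := by positivity
  calc 2 * min 2 (((m : ℝ) + 1) * π * h) * (2 / (((m : ℝ) + 1) ^ 2 * π ^ 2))
      ≤ 2 * ((((m : ℝ) + 1)) * π * h) * (2 / (((m : ℝ) + 1) ^ 2 * π ^ 2)) := by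
        gcongr
        exact min_le_right _ _
    _ = 4 * h / (((m : ℝ) + 1) * π) := by
        field_simp
        ring
    _ ≤ 2 * h * (((m : ℝ) + 1))⁻¹ := by
        rw [div_le_iff₀ (by positivity)]
        have h4 : (4:ℝ) ≤ 2 * π := by linarith
        have hinv : (0:ℝ) < (((m : ℝ) + 1))⁻¹ := by positivity
        rw [show 2 * h * (((m : ℝ) + 1))⁻¹ * (((m : ℝ) + 1) * π)
          = 2 * π * h * ((((m : ℝ) + 1))⁻¹ * ((m : ℝ) + 1)) by ring,
          inv_mul_cancel₀ hM.ne']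
        nlinarith

lemma v_le_two {h : ℝ} (hh : 0 ≤ h) (m : ℕ) :
    2 * min 2 (((m : ℝ) + 1) * π * h) * (rate m)⁻¹ ≤ (((m : ℝ) + 1) ^ 2)⁻¹ := by
  rw [rate_inv_eq]
  have hπ : (3:ℝ) ≤ π := by linarith [Real.pi_gt_three]
  have hM : (0:ℝ) < ((m : ℝ) + 1) ^ 2 := by positivity
  calc 2 * min 2 (((m : ℝ) + 1) * π * h) * (2 / (((m : ℝ) + 1) ^ 2 * π ^ 2))
      ≤ 2 * 2 * (2 / (((m : ℝ) + 1) ^ 2 * π ^ 2)) := by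
        gcongr
        exact min_le_left _ _
    _ = 8 / (((m : ℝ) + 1) ^ 2 * π ^ 2) := by ring
    _ ≤ (((m : ℝ) + 1) ^ 2)⁻¹ := by
        rw [div_le_iff₀ (by positivity), show (((m : ℝ) + 1) ^ 2)⁻¹ * (((m : ℝ) + 1) ^ 2 * π ^ 2)
          = ((((m : ℝ) + 1) ^ 2)⁻¹ * (((m : ℝ) + 1) ^ 2)) * π ^ 2 by ring,
          inv_mul_cancel₀ hM.ne', one_mul]
        nlinarith

lemma vsum_le {h : ℝ} (h0 : 0 < h) (h1 : h ≤ 1) :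
    vsum h ≤ 7 * h * Real.log (max (Real.exp 1) (1 / h)) := by
  set L := Real.log (max (Real.exp 1) (1 / h)) with hLdef
  have hL1 : 1 ≤ L := by
    rw [hLdef]
    calc (1:ℝ) = Real.log (Real.exp 1) := (Real.log_exp 1).symm
      _ ≤ _ := Real.log_le_log (Real.exp_pos 1) (le_max_left _ _)
  have hlog_inv : Real.log (1 / h) ≤ L :=
    Real.log_le_log (by positivity) (le_max_right _ _)
  set N : ℕ := ⌈1 / h⌉₊ with hNdef
  have hNge : 1 / h ≤ (N : ℝ) := Nat.le_ceil _
  have hNR : (0:ℝ) < (N : ℝ) := lt_of_lt_of_le (by positivity) hNge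
  have hinvN : ((N : ℝ))⁻¹ ≤ h := by
    rw [inv_le_comm₀ hNR h0]
    rwa [one_div] at hNge
  have hNlt : (N : ℝ) < 1 / h + 1 := Nat.ceil_lt_add_one (by positivity)
  have hone_le : (1:ℝ) ≤ 1 / h := by
    rw [le_div_iff₀ h0]; linarith
  have hlogN : Real.log (N : ℝ) ≤ 2 * L := by
    have h2 : (N : ℝ) ≤ 2 / h := by
      have : (2:ℝ) / h = 1 / h + 1 / h := by ring
      linarith
    calc Real.log (N : ℝ) ≤ Real.log (2 / h) := Real.log_le_log hNR h2
      _ = Real.log 2 + Real.log (1 / h) := by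
          rw [show (2:ℝ) / h = 2 * (1 / h) by ring]
          rw [Real.log_mul two_ne_zero (by positivity)]
      _ ≤ 1 + L := by
          have h2e : (2:ℝ) ≤ Real.exp 1 := by
            have := Real.exp_one_gt_d9
            linarith
          have hlog2 : Real.log 2 ≤ 1 := by
            calc Real.log 2 ≤ Real.log (Real.exp 1) := Real.log_le_log two_pos h2e
              _ = 1 := Real.log_exp 1
          linarith
      _ ≤ 2 * L := by linarith
  -- bound on all partial sums over `range n`
  have hpart : ∀ n : ℕ,
      (∑ m ∈ Finset.range n, 2 * min 2 (((m : ℝ) + 1) * π * h) * (rate m)⁻¹)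
      ≤ 2 * h * (1 + Real.log (N : ℝ)) + h := by
    intro n
    set n' := max n N with hn'
    have step1 : (∑ m ∈ Finset.range n, 2 * min 2 (((m : ℝ) + 1) * π * h) * (rate m)⁻¹)
        ≤ ∑ m ∈ Finset.range n', 2 * min 2 (((m : ℝ) + 1) * π * h) * (rate m)⁻¹ :=
      Finset.sum_le_sum_of_subset_of_nonneg (Finset.range_subset_range.2 (le_max_left _ _))
        (fun i _ _ => v_nonneg h h0.le i)
    have hsplit : (∑ m ∈ Finset.range n', 2 * min 2 (((m : ℝ) + 1) * π * h) * (rate m)⁻¹)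
        = (∑ m ∈ Finset.range N, 2 * min 2 (((m : ℝ) + 1) * π * h) * (rate m)⁻¹)
          + ∑ m ∈ Finset.Ico N n', 2 * min 2 (((m : ℝ) + 1) * π * h) * (rate m)⁻¹ := by
      rw [Finset.range_eq_Ico, Finset.range_eq_Ico]
      exact (Finset.sum_Ico_consecutive (fun m : ℕ => 2 * min 2 (((m : ℝ) + 1) * π * h) * (rate m)⁻¹) (Nat.zero_le N) (le_max_right n N)).symm
    have head : (∑ m ∈ Finset.range N, 2 * min 2 (((m : ℝ) + 1) * π * h) * (rate m)⁻¹)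
        ≤ 2 * h * (1 + Real.log (N : ℝ)) := by
      calc (∑ m ∈ Finset.range N, 2 * min 2 (((m : ℝ) + 1) * π * h) * (rate m)⁻¹)
          ≤ ∑ m ∈ Finset.range N, 2 * h * (((m : ℝ) + 1))⁻¹ :=
            Finset.sum_le_sum (fun m _ => v_le_one h0.le m)
        _ = 2 * h * ∑ m ∈ Finset.range N, (((m : ℝ) + 1))⁻¹ := by
            rw [Finset.mul_sum]
        _ ≤ 2 * h * (1 + Real.log (N : ℝ)) := by
            have hh2 : (∑ m ∈ Finset.range N, (((m : ℝ) + 1))⁻¹) = ((harmonic N : ℚ) : ℝ) := by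
              rw [harmonic]
              push_cast
              rfl
            rw [hh2]
            have hlog := harmonic_le_one_add_log N
            have h2h : (0:ℝ) ≤ 2 * h := by positivity
            exact mul_le_mul_of_nonneg_left hlog h2h
    have tail : (∑ m ∈ Finset.Ico N n', 2 * min 2 (((m : ℝ) + 1) * π * h) * (rate m)⁻¹)
        ≤ h := by
      calc (∑ m ∈ Finset.Ico N n', 2 * min 2 (((m : ℝ) + 1) * π * h) * (rate m)⁻¹)
          ≤ ∑ m ∈ Finset.Ico N n', (((m : ℝ) + 1) ^ 2)⁻¹ :=
            Finset.sum_le_sum (fun m _ => v_le_two h0.le m)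
        _ ≤ ∑ m ∈ Finset.Ico N n', (((m : ℝ))⁻¹ - (((m : ℝ) + 1))⁻¹) := by
            refine Finset.sum_le_sum (fun m hm => ?_)
            have hm1 : N ≤ m := (Finset.mem_Ico.1 hm).1
            have hmpos : (0:ℝ) < (m : ℝ) := by
              have : 1 ≤ N := Nat.ceil_pos.2 (by positivity)
              have : 1 ≤ m := le_trans this hm1
              exact_mod_cast Nat.pos_of_ne_zero (by omega)
            have heq : ((m : ℝ))⁻¹ - (((m : ℝ) + 1))⁻¹ = (((m : ℝ)) * ((m : ℝ) + 1))⁻¹ := by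
              rw [mul_inv]
              field_simp
              ring
            rw [heq]
            apply inv_anti₀ (by positivity)
            nlinarith
        _ ≤ ((N : ℝ))⁻¹ := by
            rw [Finset.sum_Ico_eq_sum_range]
            have hterm : ∀ i : ℕ, ((((N + i : ℕ)) : ℝ))⁻¹ - ((((N + i : ℕ)) : ℝ) + 1)⁻¹
                = (fun j : ℕ => (((N + j : ℕ) : ℝ))⁻¹) i - (fun j : ℕ => (((N + j : ℕ) : ℝ))⁻¹) (i + 1) := by
              intro i
              simp only
              congr 2
              push_cast
              ring
            calc (∑ i ∈ Finset.range (n' - N), ((((N + i : ℕ) : ℝ))⁻¹ - ((((N + i : ℕ)) : ℝ) + 1)⁻¹))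
                = ∑ i ∈ Finset.range (n' - N),
                    ((fun j : ℕ => (((N + j : ℕ) : ℝ))⁻¹) i
                      - (fun j : ℕ => (((N + j : ℕ) : ℝ))⁻¹) (i + 1)) := by
                  exact Finset.sum_congr rfl (fun i _ => hterm i)
              _ = (((N + 0 : ℕ) : ℝ))⁻¹ - (((N + (n' - N) : ℕ) : ℝ))⁻¹ :=
                  Finset.sum_range_sub' _ _
              _ ≤ ((N : ℝ))⁻¹ := by
                  simp only [Nat.add_zero]
                  have : (0:ℝ) ≤ (((N + (n' - N) : ℕ) : ℝ))⁻¹ := by positivity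
                  linarith
        _ ≤ h := hinvN
    calc (∑ m ∈ Finset.range n, 2 * min 2 (((m : ℝ) + 1) * π * h) * (rate m)⁻¹)
        ≤ _ := step1
      _ = _ := hsplit
      _ ≤ 2 * h * (1 + Real.log (N : ℝ)) + h := add_le_add head tail
  -- conclude for the tsum
  have htsum : vsum h ≤ 2 * h * (1 + Real.log (N : ℝ)) + h := by
    refine Summable.tsum_le_of_sum_le (summable_v h0.le) (fun u => ?_)
    obtain ⟨n, hn⟩ := u.exists_nat_subset_range
    calc (∑ m ∈ u, 2 * min 2 (((m : ℝ) + 1) * π * h) * (rate m)⁻¹)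
        ≤ ∑ m ∈ Finset.range n, 2 * min 2 (((m : ℝ) + 1) * π * h) * (rate m)⁻¹ :=
          Finset.sum_le_sum_of_subset_of_nonneg hn (fun i _ _ => v_nonneg h h0.le i)
      _ ≤ _ := hpart n
  have hfin : 2 * h * (1 + Real.log (N : ℝ)) + h ≤ 7 * h * L := by
    have hbound : 1 + Real.log (N : ℝ) ≤ 3 * L := by linarith
    have hstep : 2 * h * (1 + Real.log (N : ℝ)) ≤ 2 * h * (3 * L) :=
      mul_le_mul_of_nonneg_left hbound (by positivity)
    have hhL : h ≤ h * L := le_mul_of_one_le_right h0.le hL1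
    nlinarith
  linarith

end HeatAux

theorem integral_heatKernel_abs_diff_le :
    ∃ C : ℝ, ∀ x ∈ Set.Icc (0 : ℝ) 1, ∀ x' ∈ Set.Icc (0 : ℝ) 1,
      ∫ t in Set.Ioi (0 : ℝ), (∫ y in (0 : ℝ)..1, |G t x y - G t x' y|)
        ≤ C * |x - x'| * Real.log (max (Real.exp 1) (1 / |x - x'|)) := by
  refine ⟨7, ?_⟩
  rintro x ⟨hx0, hx1⟩ x' ⟨hx'0, hx'1⟩
  by_cases hxx : x = x'
  · subst hxx
    simp
  · have h0 : 0 < |x - x'| := abs_pos.2 (sub_ne_zero.2 hxx)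
    have h1 : |x - x'| ≤ 1 := by
      rw [abs_le]
      constructor <;> linarith
    have hnonneg : 0 ≤ᵐ[volume.restrict (Set.Ioi (0:ℝ))]
        (fun t => ∫ y in (0:ℝ)..1, |G t x y - G t x' y|) := by
      refine ae_of_all _ (fun t => ?_)
      exact intervalIntegral.integral_nonneg (by norm_num) (fun y _ => abs_nonneg _)
    have hle : (fun t => ∫ y in (0:ℝ)..1, |G t x y - G t x' y|)
        ≤ᵐ[volume.restrict (Set.Ioi (0:ℝ))] HeatAux.gmaj |x - x'| := by
      refine (ae_restrict_iff' measurableSet_Ioi).2 (ae_of_all _ (fun t ht => ?_))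
      rw [HeatAux.gmaj_eq h0.le ht]
      exact HeatAux.inner_le ht x x'
    calc (∫ t in Set.Ioi (0:ℝ), (∫ y in (0:ℝ)..1, |G t x y - G t x' y|))
        ≤ ∫ t in Set.Ioi (0:ℝ), HeatAux.gmaj |x - x'| t :=
          MeasureTheory.integral_mono_of_nonneg hnonneg
            (HeatAux.integrable_gmaj h0.le) hle
      _ = HeatAux.vsum |x - x'| := HeatAux.integral_gmaj h0.le
      _ ≤ 7 * |x - x'| * Real.log (max (Real.exp 1) (1 / |x - x'|)) :=
          HeatAux.vsum_le h0 h1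
end

section
/- There is a constant C such that for every ε > 0, sup_{t>0} sup_{x∈[0,1]} ∫₀^t ∫₀¹ |G_{t+ε−s}(x,y) − G_{t−s}(x,y)| dy ds ≤ C·√ε, where G is the Dirichlet heat kernel on [0,1]. -/
open Real MeasureTheory intervalIntegral

/-- exponential factor in the heat kernel -/
private noncomputable def Ek (n : ℕ) (u : ℝ) : ℝ :=
  Real.exp (-((n : ℝ) + 1) ^ 2 * Real.pi ^ 2 * u / 2)

private lemma Ek_pos (n : ℕ) (u : ℝ) : 0 < Ek n u := Real.exp_pos _

private lemma Ek_anti (n : ℕ) {u v : ℝ} (huv : u ≤ v) : Ek n v ≤ Ek n u := by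
  unfold Ek
  apply Real.exp_le_exp.mpr
  have h1 : (0:ℝ) ≤ ((n:ℝ)+1)^2 * Real.pi ^ 2 := by positivity
  nlinarith

private lemma summable_Ek {u : ℝ} (hu : 0 < u) : Summable (fun n : ℕ => Ek n u) := by
  have hr1 : Real.exp (-(Real.pi ^ 2 * u / 2)) < 1 := by
    rw [Real.exp_lt_one_iff]
    have h : (0:ℝ) < Real.pi ^ 2 * u / 2 := by positivity
    linarith
  have hr0 : 0 ≤ Real.exp (-(Real.pi ^ 2 * u / 2)) := (Real.exp_pos _).le
  refine Summable.of_nonneg_of_le (fun n => (Ek_pos n u).le) (fun n => ?_)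
    (summable_geometric_of_lt_one hr0 hr1)
  unfold Ek
  rw [← Real.exp_nat_mul]
  apply Real.exp_le_exp.mpr
  have hπ : (0:ℝ) < Real.pi ^ 2 * u := by positivity
  have hn : (n:ℝ) ≤ ((n:ℝ)+1)^2 := by nlinarith [sq_nonneg ((n:ℝ))]
  nlinarith


private lemma tail_sum_le (N : ℕ) (hN : 1 ≤ N) :
    ∑' k : ℕ, (1:ℝ) / ((k:ℝ) + (N:ℝ) + 1) ^ 2 ≤ 1 / (N:ℝ) := by
  have hNR : (1:ℝ) ≤ (N:ℝ) := by exact_mod_cast hN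
  apply Real.tsum_le_of_sum_range_le (fun k => by positivity)
  intro K
  have key : ∀ K : ℕ, ∑ k ∈ Finset.range K, (1:ℝ)/((k:ℝ)+(N:ℝ)+1)^2
      ≤ 1/(N:ℝ) - 1/((N:ℝ)+(K:ℝ)) := by
    intro K
    induction K with
    | zero => simp
    | succ K ih =>
      rw [Finset.sum_range_succ]
      set x : ℝ := (N:ℝ) + (K:ℝ) with hx
      have hx1 : (1:ℝ) ≤ x := by
        have : (0:ℝ) ≤ (K:ℝ) := Nat.cast_nonneg K
        linarith
      have hx0 : (0:ℝ) < x := by linarith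
      have heq : 1/x - 1/(x+1) = 1/(x*(x+1)) := by
        field_simp
        ring
      have hstep : (1:ℝ)/((K:ℝ)+(N:ℝ)+1)^2 ≤ 1/x - 1/(x+1) := by
        rw [heq]
        have h1 : (K:ℝ)+(N:ℝ)+1 = x + 1 := by rw [hx]; ring
        rw [h1]
        apply one_div_le_one_div_of_le (by positivity)
        nlinarith
      push_cast
      have hgoal : 1/(N:ℝ) - 1/((N:ℝ)+((K:ℝ)+1)) = 1/(N:ℝ) - 1/(x+1) := by rw [hx]; ring_nf
      rw [hgoal]
      linarith
  have hK := key K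
  have hpos : (0:ℝ) < (N:ℝ)+(K:ℝ) := by
    have : (0:ℝ) ≤ (K:ℝ) := Nat.cast_nonneg K
    linarith
  have : (0:ℝ) ≤ 1/((N:ℝ)+(K:ℝ)) := by positivity
  linarith

private lemma summable_one_div_sq : Summable (fun n : ℕ => (1:ℝ)/((n:ℝ)+1)^2) := by
  have h : Summable (fun n : ℕ => (1:ℝ)/(n:ℝ)^2) := by
    exact_mod_cast Real.summable_one_div_nat_pow.mpr one_lt_two
  have := (summable_nat_add_iff (f := fun n : ℕ => (1:ℝ)/(n:ℝ)^2) 1).mpr h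
  refine this.congr (fun n => ?_)
  push_cast
  ring

private lemma sum_min_le {ε : ℝ} (hε : 0 < ε) :
    ∑' n : ℕ, min ((1:ℝ)/((n:ℝ)+1)^2) ε ≤ 3 * Real.sqrt ε := by
  have hs1 := summable_one_div_sq
  have hsm : Summable (fun n : ℕ => min ((1:ℝ)/((n:ℝ)+1)^2) ε) :=
    Summable.of_nonneg_of_le (fun n => le_min (by positivity) hε.le)
      (fun n => min_le_left _ _) hs1
  have hsq : 0 < Real.sqrt ε := Real.sqrt_pos.mpr hε
  rcases le_or_gt 1 ε with h1 | h1
  · have hsq1 : 1 ≤ Real.sqrt ε := by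
      rw [show (1:ℝ) = Real.sqrt 1 by simp]
      exact Real.sqrt_le_sqrt h1
    have htail : ∑' k : ℕ, (1:ℝ)/(((k+1:ℕ):ℝ)+1)^2 ≤ 1 := by
      have := tail_sum_le 1 le_rfl
      calc ∑' k : ℕ, (1:ℝ)/(((k+1:ℕ):ℝ)+1)^2
          = ∑' k : ℕ, (1:ℝ)/((k:ℝ)+(1:ℝ)+1)^2 := by
            apply tsum_congr; intro k; push_cast; ring_nf
        _ ≤ 1/(1:ℝ) := by simpa using this
        _ = 1 := by norm_num
    calc ∑' n : ℕ, min ((1:ℝ)/((n:ℝ)+1)^2) ε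
        ≤ ∑' n : ℕ, (1:ℝ)/((n:ℝ)+1)^2 :=
          Summable.tsum_le_tsum (fun n => min_le_left _ _) hsm hs1
      _ = ∑ k ∈ Finset.range 1, (1:ℝ)/((k:ℝ)+1)^2
          + ∑' k : ℕ, (1:ℝ)/(((k+1:ℕ):ℝ)+1)^2 := (Summable.sum_add_tsum_nat_add 1 hs1).symm
      _ ≤ 1 + 1 := by
          have : ∑ k ∈ Finset.range 1, (1:ℝ)/((k:ℝ)+1)^2 = 1 := by norm_num
          linarith [htail]
      _ ≤ 3 * Real.sqrt ε := by nlinarith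
  · set N := ⌈1/Real.sqrt ε⌉₊ with hNdef
    have hNpos : 1 ≤ N := Nat.one_le_ceil_iff.mpr (by positivity)
    have hNR : (1:ℝ) ≤ (N:ℝ) := by exact_mod_cast hNpos
    have hN1 : 1/Real.sqrt ε ≤ (N:ℝ) := Nat.le_ceil _
    have hN2 : (N:ℝ) ≤ 1/Real.sqrt ε + 1 := (Nat.ceil_lt_add_one (by positivity)).le
    have split := Summable.sum_add_tsum_nat_add N hsm
    rw [← split]
    have T1 : ∑ k ∈ Finset.range N, min ((1:ℝ)/((k:ℝ)+1)^2) ε ≤ (N:ℝ) * ε := by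
      calc ∑ k ∈ Finset.range N, min ((1:ℝ)/((k:ℝ)+1)^2) ε
          ≤ ∑ _k ∈ Finset.range N, ε := Finset.sum_le_sum (fun k _ => min_le_right _ _)
        _ = (N:ℝ) * ε := by simp [mul_comm]
    have hshift : Summable (fun k : ℕ => min ((1:ℝ)/(((k+N:ℕ):ℝ)+1)^2) ε) :=
      (summable_nat_add_iff N).mpr hsm
    have hshift2 : Summable (fun k : ℕ => (1:ℝ)/((k:ℝ)+(N:ℝ)+1)^2) := by
      have := (summable_nat_add_iff (f := fun n : ℕ => (1:ℝ)/((n:ℝ)+1)^2) N).mpr hs1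
      refine this.congr (fun k => ?_)
      push_cast; ring_nf
    have T2 : ∑' k : ℕ, min ((1:ℝ)/(((k+N:ℕ):ℝ)+1)^2) ε ≤ 1/(N:ℝ) := by
      calc ∑' k : ℕ, min ((1:ℝ)/(((k+N:ℕ):ℝ)+1)^2) ε
          ≤ ∑' k : ℕ, (1:ℝ)/((k:ℝ)+(N:ℝ)+1)^2 := by
            refine Summable.tsum_le_tsum (fun k => ?_) hshift hshift2
            have : (((k+N:ℕ):ℝ)+1)^2 = ((k:ℝ)+(N:ℝ)+1)^2 := by push_cast; ring
            rw [← this]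
            exact min_le_left _ _
        _ ≤ 1/(N:ℝ) := tail_sum_le N hNpos
    have hεsq : Real.sqrt ε * Real.sqrt ε = ε := Real.mul_self_sqrt hε.le
    have hεle : ε ≤ Real.sqrt ε := by nlinarith
    have hNε : (N:ℝ)*ε ≤ 2*Real.sqrt ε := by
      have h2 : (N:ℝ)*ε ≤ (1/Real.sqrt ε + 1)*ε := by nlinarith
      have h3 : (1/Real.sqrt ε)*ε = Real.sqrt ε := by
        field_simp
        rw [sq, hεsq]
      nlinarith
    have hNinv : 1/(N:ℝ) ≤ Real.sqrt ε := by
      rw [div_le_iff₀ (by linarith)]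
      calc (1:ℝ) = Real.sqrt ε * (1/Real.sqrt ε) := by field_simp
        _ ≤ Real.sqrt ε * (N:ℝ) := by nlinarith
    linarith

private lemma G_diff_bound (x y u v : ℝ) (hu : 0 < u) (huv : u ≤ v) :
    |G v x y - G u x y| ≤ 2 * ∑' n : ℕ, (Ek n u - Ek n v) := by
  have hv : 0 < v := hu.trans_le huv
  have hSu := summable_Ek hu
  have hSv := summable_Ek hv
  set p : ℕ → ℝ → ℝ := fun n w =>
    Real.sin (((n : ℝ) + 1) * Real.pi * x) * Real.sin (((n : ℝ) + 1) * Real.pi * y) * Ek n w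
    with hp
  have hpb : ∀ n w, |p n w| ≤ Ek n w := by
    intro n w
    rw [hp]
    simp only
    rw [abs_mul, abs_mul, abs_of_pos (Ek_pos n w)]
    have h12 : |Real.sin (((n:ℝ)+1)*Real.pi*x)| * |Real.sin (((n:ℝ)+1)*Real.pi*y)| ≤ 1 :=
      mul_le_one₀ (Real.abs_sin_le_one _) (abs_nonneg _) (Real.abs_sin_le_one _)
    calc |Real.sin (((n:ℝ)+1)*Real.pi*x)| * |Real.sin (((n:ℝ)+1)*Real.pi*y)| * Ek n w
        ≤ 1 * Ek n w := mul_le_mul_of_nonneg_right h12 (Ek_pos n w).le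
      _ = Ek n w := one_mul _
  have hSpu : Summable (fun n => p n u) :=
    Summable.of_norm_bounded hSu (fun n => hpb n u)
  have hSpv : Summable (fun n => p n v) :=
    Summable.of_norm_bounded hSv (fun n => hpb n v)
  have hG : ∀ w, G w x y = 2 * ∑' n : ℕ, p n w := fun w => rfl
  have key : G v x y - G u x y = 2 * ∑' n : ℕ, (p n v - p n u) := by
    rw [hG u, hG v, Summable.tsum_sub hSpv hSpu]
    ring
  have hdb : ∀ n, |p n v - p n u| ≤ Ek n u - Ek n v := by
    intro n
    have : p n v - p n u = Real.sin (((n : ℝ) + 1) * Real.pi * x)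
        * Real.sin (((n : ℝ) + 1) * Real.pi * y) * (Ek n v - Ek n u) := by rw [hp]; ring
    rw [this, abs_mul]
    have h1 : |Ek n v - Ek n u| = Ek n u - Ek n v := by
      rw [abs_sub_comm, abs_of_nonneg (by linarith [Ek_anti n huv])]
    rw [h1]
    have h2 : |Real.sin (((n : ℝ) + 1) * Real.pi * x) * Real.sin (((n : ℝ) + 1) * Real.pi * y)| ≤ 1 := by
      rw [abs_mul]
      exact mul_le_one₀ (Real.abs_sin_le_one _) (abs_nonneg _) (Real.abs_sin_le_one _)
    nlinarith [Ek_anti n huv, abs_nonneg (Real.sin (((n : ℝ) + 1) * Real.pi * x) * Real.sin (((n : ℝ) + 1) * Real.pi * y))]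
  have hSd : Summable (fun n => |p n v - p n u|) :=
    Summable.of_nonneg_of_le (fun n => abs_nonneg _) hdb (hSu.sub hSv)
  rw [key, abs_mul, abs_two]
  have habs : |∑' n : ℕ, (p n v - p n u)| ≤ ∑' n : ℕ, (Ek n u - Ek n v) := by
    calc |∑' n : ℕ, (p n v - p n u)| ≤ ∑' n : ℕ, |p n v - p n u| := by
          simpa using norm_tsum_le_tsum_norm (f := fun n => p n v - p n u) (by simpa using hSd)
      _ ≤ ∑' n : ℕ, (Ek n u - Ek n v) := Summable.tsum_le_tsum hdb hSd (hSu.sub hSv)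
  linarith

private lemma integral_exp_neg_mul (L a b : ℝ) (hL : 0 < L) :
    ∫ x in a..b, Real.exp (-L * x) = (Real.exp (-L*a) - Real.exp (-L*b))/L := by
  have h := intervalIntegral.integral_comp_mul_left (a := a) (b := b) Real.exp
    (neg_ne_zero.mpr hL.ne')
  rw [h, integral_exp]
  rw [smul_eq_mul]
  field_simp [hL.ne']
  ring

private lemma key_integral (n : ℕ) {t ε : ℝ} (ht : 0 < t) (hε : 0 < ε) :
    ∫ s in Set.Ioo (0:ℝ) t, (Ek n (t - s) - Ek n (t + ε - s))
      ≤ min ((1:ℝ)/((n:ℝ)+1)^2) ε := by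
  set L : ℝ := ((n:ℝ)+1)^2 * Real.pi^2 / 2 with hLdef
  have hL : 0 < L := by rw [hLdef]; positivity
  have hEk : ∀ u : ℝ, Ek n u = Real.exp (-L * u) := by
    intro u
    unfold Ek
    congr 1
    rw [hLdef]; ring
  have hc1 : Continuous (fun s : ℝ => Real.exp (-L * (t - s))) := by fun_prop
  have hc2 : Continuous (fun s : ℝ => Real.exp (-L * (t + ε - s))) := by fun_prop
  have hIoo : ∫ s in Set.Ioo (0:ℝ) t, (Ek n (t - s) - Ek n (t + ε - s))
      = ∫ s in (0:ℝ)..t, (Real.exp (-L * (t - s)) - Real.exp (-L * (t + ε - s))) := by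
    rw [intervalIntegral.integral_of_le ht.le, MeasureTheory.integral_Ioc_eq_integral_Ioo]
    simp_rw [hEk]
  rw [hIoo]
  rw [intervalIntegral.integral_sub (hc1.intervalIntegrable _ _) (hc2.intervalIntegrable _ _)]
  have I1 : ∫ s in (0:ℝ)..t, Real.exp (-L * (t - s))
      = (Real.exp (-L*0) - Real.exp (-L*t))/L := by
    have h := intervalIntegral.integral_comp_sub_left (a := (0:ℝ)) (b := t)
      (fun u => Real.exp (-L * u)) t
    simp only [sub_self, sub_zero] at h
    rw [h, integral_exp_neg_mul _ _ _ hL]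
  have I2 : ∫ s in (0:ℝ)..t, Real.exp (-L * (t + ε - s))
      = (Real.exp (-L*ε) - Real.exp (-L*(t+ε)))/L := by
    have h := intervalIntegral.integral_comp_sub_left (a := (0:ℝ)) (b := t)
      (fun u => Real.exp (-L * u)) (t + ε)
    simp only [add_sub_cancel_left, sub_zero] at h
    rw [h, integral_exp_neg_mul _ _ _ hL]
  rw [I1, I2]
  set A := Real.exp (-L * t) with hA
  set B := Real.exp (-L * ε) with hB
  have hAB : Real.exp (-L * (t + ε)) = A * B := by
    rw [hA, hB, ← Real.exp_add]; congr 1; ring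
  have hA1 : A ≤ 1 := Real.exp_le_one_iff.mpr (by nlinarith)
  have hA0 : 0 < A := Real.exp_pos _
  have hB1 : B ≤ 1 := Real.exp_le_one_iff.mpr (by nlinarith)
  have hB0 : 0 < B := Real.exp_pos _
  have hBlin : 1 - B ≤ L * ε := by
    have := Real.add_one_le_exp (-L * ε)
    rw [← hB] at this
    linarith
  rw [hAB]
  have hval : (Real.exp (-L*0) - A)/L - (B - A*B)/L = (1-A)*(1-B)/L := by
    rw [show (-L*0 : ℝ) = 0 by ring, Real.exp_zero]
    field_simp
  rw [hval]
  apply le_min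
  · have hnum : (1-A)*(1-B) ≤ 1 := by nlinarith
    calc (1-A)*(1-B)/L ≤ 1/L := (div_le_div_iff_of_pos_right hL).mpr hnum
      _ ≤ 1/((n:ℝ)+1)^2 := by
          apply one_div_le_one_div_of_le (by positivity)
          rw [hLdef]
          have hπ : (9:ℝ) ≤ Real.pi^2 := by nlinarith [Real.pi_gt_three]
          nlinarith [sq_nonneg ((n:ℝ)+1)]
  · have hnum : (1-A)*(1-B) ≤ L * ε := by nlinarith
    calc (1-A)*(1-B)/L ≤ (L*ε)/L := (div_le_div_iff_of_pos_right hL).mpr hnum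
      _ = ε := by field_simp

theorem heatKernel_time_increment_L1 :
    ∃ C : ℝ, ∀ ε : ℝ, 0 < ε → ∀ t : ℝ, 0 < t → ∀ x ∈ Set.Icc (0 : ℝ) 1,
      ∫ s in (0 : ℝ)..t, (∫ y in (0 : ℝ)..1, |G (t + ε - s) x y - G (t - s) x y|)
        ≤ C * Real.sqrt ε := by
  refine ⟨6, ?_⟩
  intro ε hε t ht x _hx
  have h6 : (0:ℝ) ≤ 6 * Real.sqrt ε := by positivity
  set h : ℝ → ℝ := fun s => ∫ y in (0:ℝ)..1, |G (t + ε - s) x y - G (t - s) x y| with hh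
  rw [intervalIntegral.integral_of_le ht.le, MeasureTheory.integral_Ioc_eq_integral_Ioo]
  set μ : Measure ℝ := volume.restrict (Set.Ioo (0:ℝ) t) with hμ
  by_cases hInt : Integrable h μ
  swap
  · rw [MeasureTheory.integral_undef hInt]; exact h6
  have h0 : ∀ s, 0 ≤ h s := fun s =>
    intervalIntegral.integral_nonneg (by norm_num) (fun y _ => abs_nonneg _)
  rw [MeasureTheory.integral_eq_lintegral_of_nonneg_ae
    (Filter.Eventually.of_forall h0) hInt.1]
  refine ENNReal.toReal_le_of_le_ofReal h6 ?_
  -- pieces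
  set g : ℕ → ℝ → ℝ := fun n s => 2 * (Ek n (t - s) - Ek n (t + ε - s)) with hg
  have hgc : ∀ n, Continuous (g n) := by
    intro n
    simp only [hg]
    unfold Ek
    fun_prop
  have hg0 : ∀ n s, 0 ≤ g n s := by
    intro n s
    have := Ek_anti n (show t - s ≤ t + ε - s by linarith)
    simp only [hg]
    linarith
  -- step 1 : pointwise bound and ofReal-tsum
  have step1 : ∫⁻ s, ENNReal.ofReal (h s) ∂μ
      ≤ ∑' n : ℕ, ∫⁻ s, ENNReal.ofReal (g n s) ∂μ := by
    rw [← MeasureTheory.lintegral_tsum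
      (fun n => ((hgc n).measurable.ennreal_ofReal).aemeasurable)]
    refine lintegral_mono_ae ?_
    filter_upwards [ae_restrict_mem measurableSet_Ioo] with s hs
    have hu : 0 < t - s := by linarith [hs.2]
    have hv : 0 < t + ε - s := by linarith
    have huv : t - s ≤ t + ε - s := by linarith
    have hb : h s ≤ 2 * ∑' n : ℕ, (Ek n (t - s) - Ek n (t + ε - s)) := by
      have hbd : ∀ y ∈ Set.uIoc (0:ℝ) 1,
          ‖|G (t + ε - s) x y - G (t - s) x y|‖
            ≤ 2 * ∑' n : ℕ, (Ek n (t - s) - Ek n (t + ε - s)) := by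
        intro y _
        rw [Real.norm_eq_abs, abs_abs]
        exact G_diff_bound x y _ _ hu huv
      have := intervalIntegral.norm_integral_le_of_norm_le_const hbd
      simp only [sub_zero, abs_one, mul_one] at this
      calc h s ≤ ‖h s‖ := le_abs_self _
        _ ≤ _ := this
    have hsummable : Summable (fun n : ℕ => Ek n (t-s) - Ek n (t+ε-s)) :=
      (summable_Ek hu).sub (summable_Ek hv)
    calc ENNReal.ofReal (h s) ≤ ENNReal.ofReal (2 * ∑' n : ℕ, (Ek n (t-s) - Ek n (t+ε-s))) :=
          ENNReal.ofReal_le_ofReal hb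
      _ = ENNReal.ofReal (∑' n : ℕ, g n s) := by
          rw [← tsum_mul_left]
      _ = ∑' n : ℕ, ENNReal.ofReal (g n s) :=
          ENNReal.ofReal_tsum_of_nonneg (fun n => hg0 n s) (hsummable.mul_left 2)
  -- step 2 : each term
  have step2 : ∀ n : ℕ, ∫⁻ s, ENNReal.ofReal (g n s) ∂μ
      ≤ ENNReal.ofReal (2 * min ((1:ℝ)/((n:ℝ)+1)^2) ε) := by
    intro n
    have hgi : Integrable (g n) μ := by
      rw [hμ]
      exact ((hgc n).integrableOn_Icc (μ := volume) (a := 0) (b := t)).mono_set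
        Set.Ioo_subset_Icc_self
    rw [← MeasureTheory.ofReal_integral_eq_lintegral_ofReal hgi
      (Filter.Eventually.of_forall (fun s => hg0 n s))]
    apply ENNReal.ofReal_le_ofReal
    have : ∫ s, g n s ∂μ = 2 * ∫ s in Set.Ioo (0:ℝ) t, (Ek n (t - s) - Ek n (t + ε - s)) := by
      rw [hμ, ← MeasureTheory.integral_const_mul]
    rw [this]
    have := key_integral n ht hε
    linarith
  -- combine
  calc ∫⁻ s, ENNReal.ofReal (h s) ∂μ
      ≤ ∑' n : ℕ, ∫⁻ s, ENNReal.ofReal (g n s) ∂μ := step1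
    _ ≤ ∑' n : ℕ, ENNReal.ofReal (2 * min ((1:ℝ)/((n:ℝ)+1)^2) ε) :=
        ENNReal.tsum_le_tsum step2
    _ = ENNReal.ofReal (∑' n : ℕ, 2 * min ((1:ℝ)/((n:ℝ)+1)^2) ε) := by
        refine (ENNReal.ofReal_tsum_of_nonneg (fun n => ?_) ?_).symm
        · have : (0:ℝ) ≤ min ((1:ℝ)/((n:ℝ)+1)^2) ε := le_min (by positivity) hε.le
          linarith
        · refine Summable.mul_left 2 ?_
          refine Summable.of_nonneg_of_le (fun n => le_min (by positivity) hε.le)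
            (fun n => min_le_left _ _) summable_one_div_sq
    _ ≤ ENNReal.ofReal (6 * Real.sqrt ε) := by
        apply ENNReal.ofReal_le_ofReal
        rw [tsum_mul_left]
        have := sum_min_le hε
        linarith
end
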